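/- For q a prime power and d a positive integer, each d dividing 2v but not dividing v is even with d/2 dividing v; moreover the d-th cyclotomic polynomial Φ_d(q) divides the Gaussian binomial coefficient [u+v-1 choose v-1]_{q²} in Z[q] whenever d/2 does not divide u, for such d. -/

import Mathlib

open Polynomial Finset

private lemma dvd_two_mul_iff' (m j : ℕ) :
    m ∣ 2 * j ↔ (if Even m then m / 2 else m) ∣ j := by
  by_cases h : Even m
  · obtain ⟨e, he⟩ := h
    have hm : m = 2 * e := by omega
    subst hm
    simp only [if_pos (even_two_mul e)]
    rw [Nat.mul_div_cancel_left _ (by norm_num : 0 < 2)]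
    exact (Nat.mul_dvd_mul_iff_left (by norm_num : 0 < 2))
  · simp only [if_neg h]
    have hc : Nat.Coprime m 2 := Nat.coprime_two_right.mpr (Nat.odd_iff.mpr (by
      rw [← Nat.not_even_iff]; exact h))
    exact ⟨fun hdvd => hc.dvd_of_dvd_mul_left hdvd, fun hdvd => hdvd.mul_left 2⟩

private lemma count_bind_divisors (m N : ℕ) :
    Multiset.count m ((range N).val.bind fun i => (2*(i+1)).divisors.val)
      = N / (if Even m then m / 2 else m) := by
  rw [Multiset.count_bind]
  have h1 : ∀ i : ℕ, Multiset.count m (2*(i+1)).divisors.val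
      = if (if Even m then m / 2 else m) ∣ (i+1) then 1 else 0 := by
    intro i
    rw [Multiset.count_eq_of_nodup (2*(i+1)).divisors.nodup]
    congr 1
    rw [eq_iff_iff, Finset.mem_val, Nat.mem_divisors]
    constructor
    · intro h; exact (dvd_two_mul_iff' m (i+1)).mp h.1
    · intro h; exact ⟨(dvd_two_mul_iff' m (i+1)).mpr h, by omega⟩
  calc (Multiset.map (fun i => Multiset.count m (2*(i+1)).divisors.val) (range N).val).sum
      = ∑ i ∈ range N, (if (if Even m then m / 2 else m) ∣ (i+1) then 1 else 0) := by
        rw [Finset.sum]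
        congr 1
        exact Multiset.map_congr rfl fun i _ => h1 i
    _ = #{e ∈ range N | (if Even m then m / 2 else m) ∣ e + 1} := (Finset.card_filter _ _).symm
    _ = N / (if Even m then m / 2 else m) := Nat.card_multiples N _

private lemma prod_eq_multiset (N : ℕ) :
    ∏ i ∈ range N, ((X:ℤ[X]) ^ (2*(i+1)) - 1) =
    (((range N).val.bind (fun i => (2*(i+1)).divisors.val)).map
      (fun m => cyclotomic m ℤ)).prod := by
  rw [Multiset.map_bind, Multiset.prod_bind]
  refine Finset.prod_congr rfl fun i _ => ?_
  rw [← Polynomial.prod_cyclotomic_eq_X_pow_sub_one (by omega) ℤ]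
  rfl


/-- If `d` is a positive integer dividing `2v` but not `v`, then `d` is even with
`d/2` dividing `v`; moreover, if additionally `d/2` does not divide `u`, then the
`d`-th cyclotomic polynomial `Φ_d(q)` divides the Gaussian binomial coefficient
`[u+v-1 choose v-1]_{q²}` in `ℤ[q]` (stated multiplicatively, since the Gaussian
binomial is the quotient `∏_{i=1}^{u+v-1}(q^{2i}-1) / (∏_{j=1}^u (q^{2j}-1) ∏_{k=1}^{v-1}(q^{2k}-1))`). -/
theorem cyclotomic_divides_gaussBinomial (u v d : ℕ) (hd : 0 < d) (hv : 0 < v)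
    (h2v : d ∣ 2 * v) (hnv : ¬ d ∣ v) :
    (Even d ∧ d / 2 ∣ v) ∧
    (¬ d / 2 ∣ u →
      ∃ P : Polynomial ℤ,
        Polynomial.cyclotomic d ℤ * P *
            ((∏ j ∈ Finset.range u, (Polynomial.X ^ (2 * (j + 1)) - 1)) *
              (∏ k ∈ Finset.range (v - 1), (Polynomial.X ^ (2 * (k + 1)) - 1))) =
          ∏ i ∈ Finset.range (u + v - 1), (Polynomial.X ^ (2 * (i + 1)) - 1)) := by
  -- d is even
  have hde : Even d := by
    by_contra h
    have hc : Nat.Coprime d 2 := Nat.coprime_two_right.mpr (Nat.odd_iff.mpr (by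
      rw [← Nat.not_even_iff]; exact h))
    exact hnv (hc.dvd_of_dvd_mul_left h2v)
  set e := d / 2 with he
  have hd2 : d = 2 * e := by
    obtain ⟨k, hk⟩ := hde; omega
  have hev : e ∣ v := by
    rw [hd2] at h2v
    exact (Nat.mul_dvd_mul_iff_left (by norm_num : 0 < 2)).mp h2v
  refine ⟨⟨hde, hev⟩, fun hnu => ?_⟩
  -- e ≥ 2, u ≥ 1
  have hu1 : 1 ≤ u := by
    rcases Nat.eq_zero_or_pos u with h | h
    · exact absurd (h ▸ dvd_zero e) hnu
    · exact h
  have he1 : 1 ≤ e := by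
    rcases Nat.eq_zero_or_pos e with h | h
    · omega
    · exact h
  obtain ⟨m₀, hm₀⟩ := hev
  have hm₀1 : 1 ≤ m₀ := by
    rcases Nat.eq_zero_or_pos m₀ with h | h
    · rw [h, Nat.mul_zero] at hm₀; omega
    · exact h
  -- the multiset machinery
  set M : ℕ → Multiset ℕ := fun N => (range N).val.bind (fun i => (2*(i+1)).divisors.val) with hM
  have hle : M u + M (v-1) + {d} ≤ M (u + v - 1) := by
    rw [Multiset.le_iff_count]
    intro m
    simp only [Multiset.count_add, hM, count_bind_divisors]
    have hsing : Multiset.count m ({d} : Multiset ℕ) = if m = d then 1 else 0 := by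
      simp [Multiset.count_singleton]
    rw [hsing]
    set k := (if Even m then m / 2 else m) with hk
    by_cases hmd : m = d
    · -- k = e here
      have hke : k = e := by rw [hk, hmd, if_pos hde]
      rw [if_pos hmd, hke]
      -- u/e + (v-1)/e + 1 ≤ (u+v-1)/e
      obtain ⟨n, rfl⟩ : ∃ n, m₀ = n + 1 := ⟨m₀ - 1, by omega⟩
      have hv' : v = e * n + e := by rw [hm₀]; ring
      have h1 : (v - 1) / e = n := by
        have hveq : v - 1 = e * n + (e - 1) := by omega
        rw [hveq, Nat.mul_add_div (by omega)]
        rw [Nat.div_eq_of_lt (by omega : e - 1 < e)]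
        omega
      have h2 : u / e = (u - 1) / e := by
        have hsd : (u - 1 + 1) / e = (u - 1) / e + if e ∣ u - 1 + 1 then 1 else 0 := Nat.succ_div
        have hu : u - 1 + 1 = u := by omega
        rw [hu] at hsd
        rw [hsd, if_neg hnu]
        omega
      have h3 : (u + v - 1) / e = (u - 1) / e + (n + 1) := by
        have huveq : u + v - 1 = (u - 1) + e * (n + 1) := by omega
        rw [huveq, Nat.add_mul_div_left _ _ (by omega : 0 < e)]
      omega
    · rw [if_neg hmd]
      have huv : u + (v - 1) = u + v - 1 := by omega
      rcases Nat.eq_zero_or_pos k with hk0 | hk0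
      · simp [hk0]
      · have hdivle := Nat.add_div_le_add_div u (v-1) k
        rw [huv] at hdivle
        omega
  set D := M (u + v - 1) - (M u + M (v-1) + {d}) with hD
  refine ⟨(D.map (fun m => cyclotomic m ℤ)).prod, ?_⟩
  have hsum : M u + M (v-1) + {d} + D = M (u + v - 1) := by
    rw [hD, add_comm]
    exact tsub_add_cancel_of_le hle
  simp only [hM] at hsum
  rw [prod_eq_multiset u, prod_eq_multiset (v-1), prod_eq_multiset (u+v-1), ← hsum]
  simp only [Multiset.map_add, Multiset.prod_add, Multiset.map_singleton, Multiset.prod_singleton]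
  ring
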